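/- Let X be a Banach lattice, 1 < q < ∞, and C > 0, and suppose that every normalized pairwise disjoint sequence in X has a subsequence with a lower q-estimate with constant C. Let {e_i}_{i≥1} be a normalized pairwise disjoint sequence in X which is 1-symmetric, i.e. ‖Σ_i a_i e_{σ(i)}‖ = ‖Σ_i a_i e_i‖ for every injection σ : ℕ → ℕ and every finitely supported scalar sequence {a_i}. Then for all n, k ∈ ℕ and all scalars a_1,…,a_k one has ‖Σ_{i=1}^k a_i (Σ_{j=1}^n e_{(i−1)n+j})‖ ≥ C n^{1/q} ‖Σ_{i=1}^k a_i e_i‖. -/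

import Mathlib

open Filter Finset

/-- A sequence is normalized if every term has norm one. -/
def IsNormalizedSeq {X : Type*} [NormedAddCommGroup X] (x : ℕ → X) : Prop :=
  ∀ n, ‖x n‖ = 1

/-- A sequence in a Banach lattice is pairwise disjoint if `|x i| ⊓ |x j| = 0` for `i ≠ j`. -/
def IsDisjointSeq {X : Type*} [NormedAddCommGroup X] [Lattice X] [HasSolidNorm X]
    [IsOrderedAddMonoid X] (x : ℕ → X) : Prop :=
  ∀ i j, i ≠ j → |x i| ⊓ |x j| = 0

/-- A sequence is weakly null if `f (x n) → 0` for every continuous linear functional `f`. -/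
def IsWeaklyNull {X : Type*} [NormedAddCommGroup X] [NormedSpace ℝ X] (x : ℕ → X) : Prop :=
  ∀ f : X →L[ℝ] ℝ, Tendsto (fun n => f (x n)) atTop (nhds 0)

/-- A sequence has an upper `p`-estimate with constant `C`. -/
def HasUpperEstimate {X : Type*} [NormedAddCommGroup X] [NormedSpace ℝ X]
    (p C : ℝ) (x : ℕ → X) : Prop :=
  ∀ (n : ℕ) (a : ℕ → ℝ),
    ‖∑ k ∈ Finset.range n, a k • x k‖ ≤ C * (∑ k ∈ Finset.range n, |a k| ^ p) ^ (1 / p)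

/-- A sequence has a lower `q`-estimate with constant `C`. -/
def HasLowerEstimate {X : Type*} [NormedAddCommGroup X] [NormedSpace ℝ X]
    (q C : ℝ) (x : ℕ → X) : Prop :=
  ∀ (n : ℕ) (a : ℕ → ℝ),
    C * (∑ k ∈ Finset.range n, |a k| ^ q) ^ (1 / q) ≤ ‖∑ k ∈ Finset.range n, a k • x k‖

/-- A sequence is equivalent to the unit vector basis of `ℓ_r`. -/
def EquivUnitBasisLp {X : Type*} [NormedAddCommGroup X] [NormedSpace ℝ X]
    (r : ℝ) (x : ℕ → X) : Prop :=
  ∃ c C : ℝ, 0 < c ∧ 0 < C ∧ HasLowerEstimate r c x ∧ HasUpperEstimate r C x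

/-- `smoothOrder p` is the greatest integer strictly less than `p` (for `p > 1`). -/
noncomputable def smoothOrder (p : ℝ) : ℕ := ⌈p⌉₊ - 1

/-- `φ : X → ℝ` is `UH^p`-smooth: it is `N`-times Fréchet differentiable, where `N` is the
greatest integer strictly below `p`, and its `N`-th derivative is `(p-N)`-Hölder. -/
def IsUHSmoothFun {X : Type*} [NormedAddCommGroup X] [NormedSpace ℝ X]
    (p : ℝ) (φ : X → ℝ) : Prop :=
  ContDiff ℝ (smoothOrder p) φ ∧
  ∃ M : ℝ, 0 < M ∧ ∀ x y : X,
    ‖iteratedFDeriv ℝ (smoothOrder p) φ x - iteratedFDeriv ℝ (smoothOrder p) φ y‖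
      ≤ M * ‖x - y‖ ^ (p - (smoothOrder p : ℝ))

/-- A Banach space is `UH^p`-smooth if it carries a `UH^p`-smooth bump function. -/
def IsUHSmooth (p : ℝ) (X : Type*) [NormedAddCommGroup X] [NormedSpace ℝ X] : Prop :=
  ∃ φ : X → ℝ, IsUHSmoothFun p φ ∧
    Bornology.IsBounded (Function.support φ) ∧ (Function.support φ).Nonempty

/-- `X` has the `UDS_p`-property: there is a uniform constant `C` such that every normalized
pairwise disjoint sequence has a subsequence with an upper `p`-estimate with constant `C`. -/
def HasUDS (X : Type*) [NormedAddCommGroup X] [Lattice X] [HasSolidNorm X]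
    [IsOrderedAddMonoid X] [NormedSpace ℝ X] (p : ℝ) : Prop :=
  ∃ C : ℝ, 0 < C ∧ ∀ x : ℕ → X, IsNormalizedSeq x → IsDisjointSeq x →
    ∃ φ : ℕ → ℕ, StrictMono φ ∧ HasUpperEstimate p C (x ∘ φ)

section helpers
variable {X : Type*} [NormedAddCommGroup X] [Lattice X] [HasSolidNorm X]
    [IsOrderedAddMonoid X] [NormedSpace ℝ X] [PosSMulStrictMono ℝ X]

lemma my_smul_inf {c : ℝ} (hc : 0 < c) (x y : X) : c • (x ⊓ y) = (c • x) ⊓ (c • y) :=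
  map_inf (OrderIso.smulRight hc) x y

lemma my_smul_sup {c : ℝ} (hc : 0 < c) (x y : X) : c • (x ⊔ y) = (c • x) ⊔ (c • y) :=
  map_sup (OrderIso.smulRight hc) x y

lemma my_abs_smul (r : ℝ) (x : X) : |r • x| = |r| • |x| := by
  rcases lt_trichotomy r 0 with h | h | h
  · have h1 : r • x = -((-r) • x) := by rw [neg_smul, neg_neg]
    rw [h1, abs_neg, abs_of_neg h, abs, abs, my_smul_sup (by linarith), smul_neg]
  · simp [h]
  · rw [abs_of_pos h, abs, abs, my_smul_sup h, smul_neg]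

lemma my_abs_sum_le {ι : Type*} (s : Finset ι) (f : ι → X) :
    |∑ i ∈ s, f i| ≤ ∑ i ∈ s, |f i| := by
  classical
  induction s using Finset.cons_induction with
  | empty => simp
  | cons i s his ih =>
    rw [Finset.sum_cons, Finset.sum_cons]
    exact (abs_add_le _ _).trans (add_le_add_right ih _)

lemma my_inf_zero_add {a b c : X} (ha : 0 ≤ a) (hb : 0 ≤ b) (hc : 0 ≤ c)
    (hac : a ⊓ c = 0) (hbc : b ⊓ c = 0) : (a + b) ⊓ c = 0 := by
  have h1 : (a + b) ⊓ c ≤ (a + b) ⊓ (a + c) :=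
    inf_le_inf_left _ (le_add_of_nonneg_left ha)
  rw [← add_inf, hbc, add_zero] at h1
  have h2 : (a + b) ⊓ c ≤ a ⊓ c := le_inf h1 inf_le_right
  rw [hac] at h2
  exact le_antisymm h2 (le_inf (add_nonneg ha hb) hc)

lemma my_sum_inf_zero {ι : Type*} (s : Finset ι) (f : ι → X) (c : X)
    (hf : ∀ i ∈ s, 0 ≤ f i) (hc : 0 ≤ c) (h : ∀ i ∈ s, f i ⊓ c = 0) :
    (∑ i ∈ s, f i) ⊓ c = 0 := by
  classical
  induction s using Finset.cons_induction with
  | empty => simpa using inf_of_le_left hc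
  | cons i s his ih =>
    rw [Finset.sum_cons]
    exact my_inf_zero_add (hf i (Finset.mem_cons_self i s))
      (Finset.sum_nonneg fun j hj => hf j (Finset.mem_cons_of_mem hj)) hc
      (h i (Finset.mem_cons_self i s))
      (ih (fun j hj => hf j (Finset.mem_cons_of_mem hj))
          (fun j hj => h j (Finset.mem_cons_of_mem hj)))

lemma my_smul_disj {x y : X} (hx : 0 ≤ x) (hy : 0 ≤ y) (hxy : x ⊓ y = 0)
    {c d : ℝ} (hc : 0 ≤ c) (hd : 0 ≤ d) : (c • x) ⊓ (d • y) = 0 := by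
  have hnn : (0 : X) ≤ (c • x) ⊓ (d • y) :=
    le_inf (smul_nonneg hc hx) (smul_nonneg hd hy)
  have hM : (0:ℝ) ≤ max c d := le_trans hc (le_max_left c d)
  rcases hM.eq_or_lt with h | h
  · have hc0 : c = 0 := le_antisymm ((le_max_left c d).trans h.ge) hc
    rw [hc0, zero_smul]
    exact inf_eq_left.2 (smul_nonneg hd hy)
  · have h1 : c • x ≤ max c d • x := smul_le_smul_of_nonneg_right (le_max_left c d) hx
    have h2 : d • y ≤ max c d • y := smul_le_smul_of_nonneg_right (le_max_right c d) hy
    have h3 : (c • x) ⊓ (d • y) ≤ max c d • (x ⊓ y) := by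
      rw [my_smul_inf h]
      exact inf_le_inf h1 h2
    rw [hxy, smul_zero] at h3
    exact le_antisymm h3 hnn

lemma my_sum_grid {M : Type*} [AddCommMonoid M] (K N : ℕ) (f : ℕ → M) :
    ∑ t ∈ Finset.range (K * N), f t
      = ∑ i ∈ Finset.range K, ∑ j ∈ Finset.range N, f (i * N + j) := by
  induction K with
  | zero => simp
  | succ K ih =>
    rw [Finset.sum_range_succ, ← ih, Nat.succ_mul, Finset.sum_range_add]

end helpers

/-- Proposition 1(2), intermediate claim: if every normalized pairwise disjoint sequence in the
Banach lattice `X` has a subsequence with a lower `q`-estimate with uniform constant `C`, and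
`e` is a normalized pairwise disjoint `1`-symmetric sequence, then the dilation operator `D_n`
(sending `e i` to the block `∑_{j<n} e (i*n+j)`) satisfies `‖D_n x‖ ≥ C n^{1/q} ‖x‖`. -/
theorem statement5 {X : Type*} [NormedAddCommGroup X] [Lattice X] [HasSolidNorm X]
    [IsOrderedAddMonoid X] [NormedSpace ℝ X]
    [PosSMulStrictMono ℝ X] [CompleteSpace X] (q C : ℝ) (hq : 1 < q) (hC : 0 < C)
    (hUDT : ∀ x : ℕ → X, IsNormalizedSeq x → IsDisjointSeq x →
      ∃ φ : ℕ → ℕ, StrictMono φ ∧ HasLowerEstimate q C (x ∘ φ))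
    (e : ℕ → X) (hnorm : IsNormalizedSeq e) (hdisj : IsDisjointSeq e)
    (hsymm : ∀ σ : ℕ → ℕ, Function.Injective σ → ∀ (k : ℕ) (a : ℕ → ℝ),
      ‖∑ i ∈ Finset.range k, a i • e (σ i)‖ = ‖∑ i ∈ Finset.range k, a i • e i‖)
    (n k : ℕ) (a : ℕ → ℝ) :
    C * (n : ℝ) ^ (1 / q) * ‖∑ i ∈ Finset.range k, a i • e i‖
      ≤ ‖∑ i ∈ Finset.range k, a i • (∑ j ∈ Finset.range n, e (i * n + j))‖ := by
    -- Symmetry upgraded to injections on an initial segment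
  have hsymm' : ∀ (K : ℕ) (b : ℕ → ℝ) (σ : ℕ → ℕ),
      (∀ t < K, ∀ t' < K, σ t = σ t' → t = t') →
      ‖∑ t ∈ Finset.range K, b t • e (σ t)‖ = ‖∑ t ∈ Finset.range K, b t • e t‖ := by
    intro K b σ hinj
    set M := (Finset.range K).sup σ + 1 with hM
    set τ : ℕ → ℕ := fun t => if t < K then σ t else t + M with hτ
    have hτinj : Function.Injective τ := by
      intro t t' h
      simp only [hτ] at h
      by_cases ht : t < K <;> by_cases ht' : t' < K
      · rw [if_pos ht, if_pos ht'] at h; exact hinj t ht t' ht' h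
      · rw [if_pos ht, if_neg ht'] at h
        have : σ t < M := Nat.lt_succ_of_le (Finset.le_sup (Finset.mem_range.2 ht))
        omega
      · rw [if_neg ht, if_pos ht'] at h
        have : σ t' < M := Nat.lt_succ_of_le (Finset.le_sup (Finset.mem_range.2 ht'))
        omega
      · rw [if_neg ht, if_neg ht'] at h; omega
    have := hsymm τ hτinj K b
    rw [← this]
    congr 1
    refine Finset.sum_congr rfl fun t ht => ?_
    rw [hτ]; simp only [if_pos (Finset.mem_range.1 ht)]
  rcases Nat.eq_zero_or_pos n with hn | hn
  · subst hn
    have h0 : (1 : ℝ) / q ≠ 0 := by positivity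
    simp only [Nat.cast_zero, Real.zero_rpow h0, mul_zero, zero_mul]
    exact norm_nonneg _
  set S := ∑ i ∈ Finset.range k, a i • e i with hS
  rcases eq_or_ne S 0 with hS0 | hS0
  · rw [hS0, norm_zero, mul_zero]
    exact norm_nonneg _
  have hk : 0 < k := by
    rcases Nat.eq_zero_or_pos k with h | h
    · exfalso; apply hS0; rw [hS, h]; simp
    · exact h
  have hs : 0 < ‖S‖ := norm_pos_iff.2 hS0
  set s := ‖S‖ with hsdef
  -- the disjoint translates
  set g : ℕ → X := fun m => ∑ i ∈ Finset.range k, a i • e (i + m * k) with hg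
  have hgnorm : ∀ m, ‖g m‖ = s := by
    intro m
    exact hsymm (fun i => i + m * k) (add_left_injective _) k a
  -- pairwise disjointness of the g's
  have hgdisj : ∀ m m', m ≠ m' → |g m| ⊓ |g m'| = 0 := by
    intro m m' hmm
    have key : ∀ i < k, ∀ j < k, (i + m * k) ≠ (j + m' * k) := by
      intro i hi j hj heq
      rcases Ne.lt_or_gt hmm with h | h
      · have h1 : (m + 1) * k ≤ m' * k := Nat.mul_le_mul_right k (by omega)
        have h2 : (m + 1) * k = m * k + k := by ring
        omega
      · have h1 : (m' + 1) * k ≤ m * k := Nat.mul_le_mul_right k (by omega)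
        have h2 : (m' + 1) * k = m' * k + k := by ring
        omega
    set G : ℕ → X := fun m => ∑ i ∈ Finset.range k, |a i| • |e (i + m * k)| with hG
    have habs : ∀ m, |g m| ≤ G m := by
      intro m
      refine le_trans (my_abs_sum_le _ _) (le_of_eq ?_)
      exact Finset.sum_congr rfl fun i _ => my_abs_smul _ _
    have hGnn : ∀ m, 0 ≤ G m := fun m =>
      Finset.sum_nonneg fun i _ => smul_nonneg (abs_nonneg _) (abs_nonneg _)
    have hGG : G m ⊓ G m' = 0 := by
      refine my_sum_inf_zero _ _ _
        (fun i _ => smul_nonneg (abs_nonneg _) (abs_nonneg _)) (hGnn m') ?_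
      intro i hi
      rw [inf_comm]
      refine my_sum_inf_zero _ _ _
        (fun j _ => smul_nonneg (abs_nonneg _) (abs_nonneg _))
        (smul_nonneg (abs_nonneg _) (abs_nonneg _)) ?_
      intro j hj
      rw [inf_comm]
      exact my_smul_disj (abs_nonneg _) (abs_nonneg _)
        (hdisj _ _ (key i (Finset.mem_range.1 hi) j (Finset.mem_range.1 hj)))
        (abs_nonneg _) (abs_nonneg _)
    have hle : |g m| ⊓ |g m'| ≤ 0 := by
      calc |g m| ⊓ |g m'| ≤ G m ⊓ G m' := inf_le_inf (habs m) (habs m')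
        _ = 0 := hGG
    exact le_antisymm hle (le_inf (abs_nonneg _) (abs_nonneg _))
  -- the normalized disjoint sequence
  set z : ℕ → X := fun m => s⁻¹ • g m with hz
  have hzn : IsNormalizedSeq z := by
    intro m
    rw [hz]
    simp only [norm_smul, Real.norm_eq_abs, abs_of_pos (inv_pos.2 hs), hgnorm m]
    exact inv_mul_cancel₀ hs.ne'
  have hzd : IsDisjointSeq z := by
    intro m m' hmm
    rw [hz]
    simp only
    rw [my_abs_smul, my_abs_smul, abs_of_pos (inv_pos.2 hs),
      ← my_smul_inf (inv_pos.2 hs), hgdisj m m' hmm, smul_zero]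
  obtain ⟨φ, hφ, hlow⟩ := hUDT z hzn hzd
  have hest := hlow n (fun _ => 1)
  simp only [abs_one, Real.one_rpow, Finset.sum_const, Finset.card_range,
    nsmul_eq_mul, mul_one, one_smul, Function.comp] at hest
  -- the big sum
  set W := ∑ m ∈ Finset.range n, g (φ m) with hW
  have hWnorm : C * (n : ℝ) ^ (1 / q) ≤ s⁻¹ * ‖W‖ := by
    have : ∑ m ∈ Finset.range n, z (φ m) = s⁻¹ • W := by
      rw [hW, Finset.smul_sum]
    rw [this, norm_smul, Real.norm_eq_abs, abs_of_pos (inv_pos.2 hs)] at hest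
    exact hest
  -- identify ‖W‖ with the dilated norm via symmetry
  set b : ℕ → ℝ := fun t => a (t / n) with hb
  have hT : ∑ i ∈ Finset.range k, a i • (∑ j ∈ Finset.range n, e (i * n + j))
      = ∑ t ∈ Finset.range (k * n), b t • e t := by
    rw [my_sum_grid k n (fun t => b t • e t)]
    refine Finset.sum_congr rfl fun i hi => ?_
    rw [Finset.smul_sum]
    refine Finset.sum_congr rfl fun j hj => ?_
    have hj' := Finset.mem_range.1 hj
    have : (i * n + j) / n = i := by
      rw [mul_comm, Nat.mul_add_div hn, Nat.div_eq_of_lt hj', add_zero]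
    rw [hb]; simp only [this]
  set σ : ℕ → ℕ := fun t => t / n + φ (t % n) * k with hσ
  have hWform : W = ∑ t ∈ Finset.range (k * n), b t • e (σ t) := by
    rw [my_sum_grid k n (fun t => b t • e (σ t))]
    rw [hW, Finset.sum_comm]
    refine Finset.sum_congr rfl fun i hi => ?_
    refine Finset.sum_congr rfl fun m hm => ?_
    have hm' := Finset.mem_range.1 hm
    have hdiv : (i * n + m) / n = i := by
      rw [mul_comm, Nat.mul_add_div hn, Nat.div_eq_of_lt hm', add_zero]
    have hmod : (i * n + m) % n = m := by
      rw [mul_comm, Nat.mul_add_mod, Nat.mod_eq_of_lt hm']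
    simp only [hb, hσ, hdiv, hmod]
  have hσinj : ∀ t < k * n, ∀ t' < k * n, σ t = σ t' → t = t' := by
    intro t ht t' ht' heq
    have h1 : t / n < k := Nat.div_lt_of_lt_mul (by rw [mul_comm n k]; exact ht)
    have h1' : t' / n < k := Nat.div_lt_of_lt_mul (by rw [mul_comm n k]; exact ht')
    rw [hσ] at heq
    simp only at heq
    have hmodk : t / n = t' / n := by
      have := congrArg (· % k) heq
      simpa [Nat.add_mul_mod_self_right, Nat.mod_eq_of_lt h1, Nat.mod_eq_of_lt h1'] using this
    have hφeq : φ (t % n) * k = φ (t' % n) * k := by omega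
    have : φ (t % n) = φ (t' % n) := Nat.eq_of_mul_eq_mul_right hk hφeq
    have hmn : t % n = t' % n := hφ.injective this
    calc t = n * (t / n) + t % n := (Nat.div_add_mod t n).symm
      _ = n * (t' / n) + t' % n := by rw [hmodk, hmn]
      _ = t' := Nat.div_add_mod t' n
  have hWnorm2 : ‖W‖ = ‖∑ i ∈ Finset.range k, a i • (∑ j ∈ Finset.range n, e (i * n + j))‖ := by
    rw [hWform, hsymm' (k * n) b σ hσinj, hT]
  have hfin : C * (n : ℝ) ^ (1 / q) * s ≤ ‖W‖ := by
    have := mul_le_mul_of_nonneg_right hWnorm hs.le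
    calc C * (n : ℝ) ^ (1 / q) * s ≤ s⁻¹ * ‖W‖ * s := this
      _ = ‖W‖ := by field_simp
  rw [← hWnorm2]
  exact hfin
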